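/- arXiv:1505.04330 — 2 statements merged into one kernel-verified Lean document; each statement's English description precedes it below -/
import Mathlib

section
/- Let G be a symmetric monoidal closed groupoid, i.e. a symmetric monoidal closed category in which every morphism is invertible. Then G is compact closed: setting A* := (A ⊸ I), every object A has A* as a dual object (there are unit and counit morphisms exhibiting the duality, satisfying the snake equations). -/
open CategoryTheory Category MonoidalCategory MonoidalClosed

universe v u

/-- Auxiliary: if `ε : A ⊗ B ⟶ 𝟙`, `η : 𝟙 ⟶ B ⊗ A` satisfy the first snake equation and
the second snake composite is invertible, then the second snake equation holds as well. -/
theorem snake2_of_snake1' {C : Type u} [Category.{v} C] [MonoidalCategory C]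
    {A B : C} (ε : A ⊗ B ⟶ 𝟙_ C) (η : 𝟙_ C ⟶ B ⊗ A)
    (S1 : A ◁ η ≫ (α_ A B A).inv ≫ ε ▷ A = (ρ_ A).hom ≫ (λ_ A).inv)
    (hw : IsIso (η ▷ B ≫ (α_ B A B).hom ≫ B ◁ ε)) :
    η ▷ B ≫ (α_ B A B).hom ≫ B ◁ ε = (λ_ B).hom ≫ (ρ_ B).inv := by
  have S1' : A ◁ η ⊗≫ ε ▷ A = ⊗𝟙.hom := by
    convert S1 <;> simp [monoidalComp]
  set w : 𝟙_ C ⊗ B ⟶ B ⊗ 𝟙_ C := η ▷ B ≫ (α_ B A B).hom ≫ B ◁ ε with hwdef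
  have key : w ≫ (ρ_ B).hom ≫ (λ_ B).inv ≫ w = w := by
    calc w ≫ (ρ_ B).hom ≫ (λ_ B).inv ≫ w
        = 𝟙 _ ⊗≫ η ▷ B ⊗≫ (𝟙_ C ◁ (B ◁ ε) ≫ η ▷ (B ⊗ 𝟙_ C)) ⊗≫ B ◁ ε := by
          rw [hwdef]; monoidal
      _ = 𝟙 _ ⊗≫ (𝟙_ C ◁ (η ▷ B) ≫ η ▷ ((B ⊗ A) ⊗ B)) ⊗≫ (B ⊗ A) ◁ (B ◁ ε) ⊗≫ B ◁ ε := by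
          rw [whisker_exchange]; monoidal
      _ = 𝟙 _ ⊗≫ η ▷ (𝟙_ C ⊗ B) ⊗≫ (B ⊗ A) ◁ (η ▷ B) ⊗≫
            ((B ⊗ (A ⊗ B)) ◁ ε ≫ (B ◁ ε) ▷ (𝟙_ C)) ⊗≫ 𝟙 _ := by
          rw [whisker_exchange]; monoidal
      _ = 𝟙 _ ⊗≫ η ▷ (𝟙_ C ⊗ B) ⊗≫ B ◁ ((A ◁ η ⊗≫ ε ▷ A) ▷ B) ⊗≫ (B ⊗ 𝟙_ C) ◁ ε ⊗≫ 𝟙 _ := by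
          rw [whisker_exchange]; monoidal
      _ = w := by rw [S1', hwdef]; monoidal
  have h1 : (ρ_ B).hom ≫ (λ_ B).inv ≫ w = 𝟙 _ := by
    rw [← cancel_epi w, key, Category.comp_id]
  rw [← Category.assoc] at h1
  rw [← IsIso.inv_eq_of_hom_inv_id h1]; simp

/-- a symmetric monoidal closed groupoid (every morphism invertible) is
compact closed: every object `A` has `A* := A ⊸ 𝟙` as a dual object, i.e. there are
unit and counit morphisms satisfying the snake equations (an exact pairing). -/
theorem symmetric_monoidal_closed_groupoid_compact (C : Type u) [Category.{v} C]
    [MonoidalCategory C] [SymmetricCategory C] [MonoidalClosed C]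
    (hgrpd : ∀ {X Y : C} (f : X ⟶ Y), IsIso f) (A : C) :
    Nonempty (ExactPairing ((ihom A).obj (𝟙_ C)) A) := by
  set B : C := (ihom A).obj (𝟙_ C) with hB
  let ε : A ⊗ B ⟶ 𝟙_ C := (ihom.ev A).app (𝟙_ C)
  haveI : IsIso ε := hgrpd ε
  -- `tensorLeft A` is fully faithful, since the unit of the closed adjunction is invertible
  let adj := ihom.adjunction A
  haveI : ∀ X : C, IsIso (adj.unit.app X) := fun X => hgrpd _
  haveI : IsIso adj.unit := NatIso.isIso_of_isIso_app _
  let FF : (tensorLeft A).FullyFaithful := adj.fullyFaithfulLOfIsIsoUnit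
  -- candidate coevaluation and its correction
  let η₀ : 𝟙_ C ⟶ B ⊗ A := inv ε ≫ (β_ A B).hom
  let u : A ⊗ 𝟙_ C ⟶ 𝟙_ C ⊗ A := A ◁ η₀ ≫ (α_ A B A).inv ≫ ε ▷ A
  haveI : IsIso u := hgrpd u
  let t : 𝟙_ C ⟶ 𝟙_ C := FF.preimage (((ρ_ A).hom ≫ (λ_ A).inv) ≫ inv u)
  have ht : A ◁ t = ((ρ_ A).hom ≫ (λ_ A).inv) ≫ inv u := FF.map_preimage _
  let η : 𝟙_ C ⟶ B ⊗ A := t ≫ η₀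
  have S1 : A ◁ η ≫ (α_ A B A).inv ≫ ε ▷ A = (ρ_ A).hom ≫ (λ_ A).inv := by
    have : A ◁ η = A ◁ t ≫ A ◁ η₀ := by
      simp [η, MonoidalCategory.whiskerLeft_comp]
    rw [this, ht]
    simp [u]
  have S2 := snake2_of_snake1' ε η S1 (hgrpd _)
  exact ⟨{ coevaluation' := η, evaluation' := ε,
           coevaluation_evaluation' := S1, evaluation_coevaluation' := S2 }⟩
end

section
/- Let (B, m, u) be a monoid in a monoidal dagger category C, and consider the monad T = − ⊗ B on C with T(A) = A ⊗ B, μ_A = (id_A ⊗ m) ∘ α_{A,B,B} and η_A = (id_A ⊗ u) ∘ ρ_A⁻¹. Then T is a Frobenius monad if and only if (B, m, u) is a Frobenius monoid; in that case T is a strong Frobenius monad, with (unitary) strength st_{A,B'} given by the associator α : A ⊗ (B' ⊗ B) → (A ⊗ B') ⊗ B. -/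
open CategoryTheory Category MonoidalCategory

universe v u

/-- A dagger structure on a category: a contravariant, identity-on-objects,
involutive operation on morphisms. -/
class DaggerStruct (C : Type u) [Category.{v} C] where
  dag : ∀ {X Y : C}, (X ⟶ Y) → (Y ⟶ X)
  dag_dag : ∀ {X Y : C} (f : X ⟶ Y), dag (dag f) = f
  dag_id : ∀ X : C, dag (𝟙 X) = 𝟙 X
  dag_comp : ∀ {X Y Z : C} (f : X ⟶ Y) (g : Y ⟶ Z), dag (f ≫ g) = dag g ≫ dag f

notation:max f "†" => DaggerStruct.dag f

/-- A monoidal dagger category: the dagger cooperates with the monoidal structure. -/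
class MonoidalDagger (C : Type u) [Category.{v} C] [MonoidalCategory C] extends
    DaggerStruct C where
  dag_tensor : ∀ {X₁ Y₁ X₂ Y₂ : C} (f : X₁ ⟶ Y₁) (g : X₂ ⟶ Y₂), (f ⊗ₘ g)† = f† ⊗ₘ g†
  assoc_unitary : ∀ X Y Z : C, ((α_ X Y Z).hom)† = (α_ X Y Z).inv
  lunitor_unitary : ∀ X : C, ((λ_ X).hom)† = (λ_ X).inv
  runitor_unitary : ∀ X : C, ((ρ_ X).hom)† = (ρ_ X).inv

/-- A symmetric monoidal dagger category: additionally the symmetries are unitary. -/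
class SymmetricDagger (C : Type u) [Category.{v} C] [MonoidalCategory C]
    [SymmetricCategory C] extends MonoidalDagger C where
  braiding_unitary : ∀ X Y : C, ((β_ X Y).hom)† = (β_ X Y).inv

/-- A monoid object, given by explicit data. -/
structure IsMonoidObj {C : Type u} [Category.{v} C] [MonoidalCategory C] (A : C)
    (m : A ⊗ A ⟶ A) (u : 𝟙_ C ⟶ A) : Prop where
  mul_assoc : (m ⊗ₘ 𝟙 A) ≫ m = (α_ A A A).hom ≫ (𝟙 A ⊗ₘ m) ≫ m
  one_mul : (u ⊗ₘ 𝟙 A) ≫ m = (λ_ A).hom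
  mul_one : (𝟙 A ⊗ₘ u) ≫ m = (ρ_ A).hom

/-- A Frobenius monoid in a monoidal dagger category. -/
structure IsFrobeniusMonoid {C : Type u} [Category.{v} C] [MonoidalCategory C]
    [MonoidalDagger C] (A : C) (m : A ⊗ A ⟶ A) (u : 𝟙_ C ⟶ A) extends
    IsMonoidObj A m u : Prop where
  frobenius : (m† ⊗ₘ 𝟙 A) ≫ (α_ A A A).hom ≫ (𝟙 A ⊗ₘ m) =
    (𝟙 A ⊗ₘ m†) ≫ (α_ A A A).inv ≫ (m ⊗ₘ 𝟙 A)

/-- A Frobenius monad on a dagger category. -/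
structure IsFrobeniusMonad {C : Type u} [Category.{v} C] [DaggerStruct C]
    (T : Monad C) : Prop where
  map_dag : ∀ {X Y : C} (f : X ⟶ Y), T.map (f†) = (T.map f)†
  frobenius : ∀ A : C,
    ((T.μ.app (T.obj A))†) ≫ T.map (T.μ.app A) =
      T.map ((T.μ.app A)†) ≫ T.μ.app (T.obj A)

variable {C : Type u} [Category.{v} C] [MonoidalCategory C]

/-- Multiplication `μ_A = (id_A ⊗ m) ∘ α_{A,B,B}` of the writer monad `− ⊗ B`. -/
def wMu (B : C) (m : B ⊗ B ⟶ B) (A : C) : (A ⊗ B) ⊗ B ⟶ A ⊗ B :=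
  (α_ A B B).hom ≫ (𝟙 A ⊗ₘ m)

/-- Unit `η_A = (id_A ⊗ u) ∘ ρ_A⁻¹` of the writer monad `− ⊗ B`. -/
def wEta (B : C) (u : 𝟙_ C ⟶ B) (A : C) : A ⟶ A ⊗ B :=
  (ρ_ A).inv ≫ (𝟙 A ⊗ₘ u)

/-- Strength `st_{X,A} : X ⊗ (A ⊗ B) ⟶ (X ⊗ A) ⊗ B` of the writer monad, given by the
associator. -/
def wSt (B : C) (X A : C) : X ⊗ (A ⊗ B) ⟶ (X ⊗ A) ⊗ B :=
  (α_ X A B).inv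

section Aux
variable {C : Type u} [Category.{v} C] [MonoidalCategory C]

lemma wLemL (A B : C) (f : B ⟶ B ⊗ B) (g : B ⊗ B ⟶ B) :
    (𝟙 (A ⊗ B) ⊗ₘ f) ≫ (α_ (A ⊗ B) B B).inv ≫ (((α_ A B B).hom ≫ (𝟙 A ⊗ₘ g)) ⊗ₘ 𝟙 B)
    = (α_ A B B).hom ≫ (𝟙 A ⊗ₘ ((𝟙 B ⊗ₘ f) ≫ (α_ B B B).inv ≫ (g ⊗ₘ 𝟙 B))) ≫ (α_ A B B).inv := by
  monoidal

lemma wLemR (A B : C) (f : B ⟶ B ⊗ B) (g : B ⊗ B ⟶ B) :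
    ((((𝟙 A ⊗ₘ f) ≫ (α_ A B B).inv) ⊗ₘ 𝟙 B)) ≫ (α_ (A ⊗ B) B B).hom ≫ (𝟙 (A ⊗ B) ⊗ₘ g)
    = (α_ A B B).hom ≫ (𝟙 A ⊗ₘ ((f ⊗ₘ 𝟙 B) ≫ (α_ B B B).hom ≫ (𝟙 B ⊗ₘ g))) ≫ (α_ A B B).inv := by
  monoidal

lemma wMuDag [MonoidalDagger C] (B : C) (m : B ⊗ B ⟶ B) (A : C) :
    ((wMu B m A)†) = (𝟙 A ⊗ₘ m†) ≫ (α_ A B B).inv := by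
  rw [wMu, DaggerStruct.dag_comp, MonoidalDagger.dag_tensor, DaggerStruct.dag_id,
    MonoidalDagger.assoc_unitary]

lemma wFrobAux [MonoidalDagger C] {B : C} (m : B ⊗ B ⟶ B) (A : C) :
    (((wMu B m (A ⊗ B))†) ≫ (wMu B m A ⊗ₘ 𝟙 B) =
      ((wMu B m A)† ⊗ₘ 𝟙 B) ≫ wMu B m (A ⊗ B)) ↔
    (𝟙 A ⊗ₘ ((𝟙 B ⊗ₘ m†) ≫ (α_ B B B).inv ≫ (m ⊗ₘ 𝟙 B))) =
      (𝟙 A ⊗ₘ ((m† ⊗ₘ 𝟙 B) ≫ (α_ B B B).hom ≫ (𝟙 B ⊗ₘ m))) := by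
  rw [wMuDag, wMuDag, wMu, wMu]
  simp only [assoc]
  rw [wLemL, wLemR]
  constructor
  · intro h
    have := (Iso.cancel_iso_hom_left (α_ A B B) _ _).mp (by simpa using h)
    exact (Iso.cancel_iso_inv_right _ _ (α_ A B B)).mp (by simpa using this)
  · intro h; rw [h]

end Aux

/-- for a monoid `(B, m, u)` in a monoidal dagger category, the writer monad
`T = − ⊗ B` is a Frobenius monad (i.e. `T` is a dagger functor satisfying the Frobenius
law) if and only if `(B, m, u)` is a Frobenius monoid; and in that case `T` is a strong
Frobenius monad, with unitary strength given by the associator. -/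
theorem writer_frobenius_monad_iff {B : C} {m : B ⊗ B ⟶ B} {u : 𝟙_ C ⟶ B}
    [MonoidalDagger C] (hM : IsMonoidObj B m u) :
    (((∀ {X Y : C} (f : X ⟶ Y), ((f ⊗ₘ 𝟙 B)†) = (f†) ⊗ₘ 𝟙 B) ∧
      (∀ A : C, ((wMu B m (A ⊗ B))†) ≫ (wMu B m A ⊗ₘ 𝟙 B) =
        ((wMu B m A)† ⊗ₘ 𝟙 B) ≫ wMu B m (A ⊗ B))) ↔
      IsFrobeniusMonoid B m u) ∧
    (IsFrobeniusMonoid B m u →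
      ((∀ X Y Z : C, (α_ X Y (Z ⊗ B)).inv ≫ wSt B (X ⊗ Y) Z =
          (𝟙 X ⊗ₘ wSt B Y Z) ≫ wSt B X (Y ⊗ Z) ≫ ((α_ X Y Z).inv ⊗ₘ 𝟙 B)) ∧
       (∀ A : C, wSt B (𝟙_ C) A ≫ ((λ_ A).hom ⊗ₘ 𝟙 B) = (λ_ (A ⊗ B)).hom) ∧
       (∀ X A : C, (𝟙 X ⊗ₘ wMu B m A) ≫ wSt B X A =
          wSt B X (A ⊗ B) ≫ (wSt B X A ⊗ₘ 𝟙 B) ≫ wMu B m (X ⊗ A)) ∧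
       (∀ X A : C, (𝟙 X ⊗ₘ wEta B u A) ≫ wSt B X A = wEta B u (X ⊗ A)) ∧
       (∀ X A : C, ((wSt B X A)†) = (α_ X A B).hom))) := by
  constructor
  · constructor
    · rintro ⟨-, h2⟩
      refine ⟨hM, ?_⟩
      have h := (wFrobAux m (𝟙_ C)).mp (h2 (𝟙_ C))
      have hL : ∀ (g : B ⊗ B ⟶ B ⊗ B), (𝟙 (𝟙_ C) ⊗ₘ g) = (λ_ (B ⊗ B)).hom ≫ g ≫ (λ_ (B ⊗ B)).inv := by
        intro g
        monoidal
      rw [hL, hL] at h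
      have := (Iso.cancel_iso_hom_left (λ_ (B ⊗ B)) _ _).mp h
      have := (Iso.cancel_iso_inv_right _ _ (λ_ (B ⊗ B))).mp this
      exact this.symm
    · intro hF
      refine ⟨fun f => by rw [MonoidalDagger.dag_tensor, DaggerStruct.dag_id], fun A => ?_⟩
      exact (wFrobAux m A).mpr (by rw [hF.frobenius])
  · intro _
    refine ⟨fun X Y Z => ?_, fun A => ?_, fun X A => ?_, fun X A => ?_, fun X A => ?_⟩
    · simp only [wSt]; monoidal
    · simp only [wSt]; monoidal
    · simp only [wSt, wMu]; monoidal
    · simp only [wSt, wEta]; monoidal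
    · simp only [wSt]
      rw [← MonoidalDagger.assoc_unitary, DaggerStruct.dag_dag]
end
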